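/- Let u, w be two distinct non-adjacent vertices, each having at most Δ neighbors, in a graph where every vertex independently picks a uniformly random color from a fixed set C of q colors, and a vertex retains its color iff no neighbor picked the same color. Then the probability that u and w pick the same color and both retain it, and moreover no other neighbor of a fixed third vertex v (with u, w ∈ N(v), |N(v)| ≤ Δ) picks that color, is at least (1/q)·((q−1)/q)^{3Δ}. -/

import Mathlib

open scoped Classical

/-- If every vertex independently picks a uniformly random color from a set of `q` colors,
and `u, w` are distinct non-adjacent vertices (of degree at most `Δ`) that are both neighbors
of a vertex `v` (of degree at most `Δ`), then the probability that `u` and `w` pick the same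
color, both retain it (no neighbor picked the same color), and no other neighbor of `v`
picks that color, is at least `(1/q)·((q−1)/q)^{3Δ}`. -/
theorem stmt5 {V : Type*} [Fintype V] [DecidableEq V] (G : SimpleGraph V)
    [DecidableRel G.Adj] (Δ q : ℕ) [NeZero q] (u w v : V)
    (huw : u ≠ w) (hnadj : ¬ G.Adj u w)
    (hu : u ∈ G.neighborFinset v) (hw : w ∈ G.neighborFinset v)
    (hdu : G.degree u ≤ Δ) (hdw : G.degree w ≤ Δ) (hdv : G.degree v ≤ Δ) :
    ENNReal.ofReal ((1 / (q : ℝ)) * (((q : ℝ) - 1) / q) ^ (3 * Δ)) ≤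
      (PMF.uniformOfFintype (V → Fin q)).toOuterMeasure
        {f : V → Fin q | f u = f w ∧
          (∀ x ∈ G.neighborFinset u, f x ≠ f u) ∧
          (∀ x ∈ G.neighborFinset w, f x ≠ f w) ∧
          (∀ x ∈ G.neighborFinset v, x ≠ u → x ≠ w → f x ≠ f u)} := by
  classical
  have hq1 : 1 ≤ q := NeZero.one_le
  set n := Fintype.card V with hn
  set T : Finset V :=
    (G.neighborFinset u ∪ G.neighborFinset w ∪ G.neighborFinset v) \ {u, w} with hT
  have huT : u ∉ T := by simp [hT]
  have hwT : w ∉ T := by simp [hT]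
  set t := T.card with ht
  have htΔ : t ≤ 3 * Δ := by
    calc t ≤ (G.neighborFinset u ∪ G.neighborFinset w ∪ G.neighborFinset v).card :=
        Finset.card_le_card Finset.sdiff_subset
      _ ≤ (G.neighborFinset u ∪ G.neighborFinset w).card + (G.neighborFinset v).card :=
        Finset.card_union_le _ _
      _ ≤ (G.neighborFinset u).card + (G.neighborFinset w).card + (G.neighborFinset v).card := by
        gcongr; exact Finset.card_union_le _ _
      _ ≤ Δ + Δ + Δ := by
        simp only [SimpleGraph.card_neighborFinset_eq_degree]; omega
      _ = 3 * Δ := by ring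
  have htn : t + 2 ≤ n := by
    have : T ∪ {u, w} ⊆ Finset.univ := Finset.subset_univ _
    have hc := Finset.card_le_card this
    rw [Finset.card_union_of_disjoint (by
      simp [Finset.disjoint_insert_right, huT, hwT])] at hc
    simpa [Finset.card_insert_of_notMem, huw, hn, Finset.card_univ] using hc
  -- the per-vertex allowed-color finsets
  set s : Fin q → V → Finset (Fin q) := fun c x =>
    if x = u ∨ x = w then {c} else if x ∈ T then {c}ᶜ else Finset.univ with hs
  set B : Finset (V → Fin q) := Finset.univ.biUnion (fun c => Fintype.piFinset (s c)) with hB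
  have hmemu : ∀ c (f : V → Fin q), f ∈ Fintype.piFinset (s c) → f u = c := by
    intro c f hf
    have := Fintype.mem_piFinset.1 hf u
    simpa [hs] using this
  have hBcard : B.card = q * ((q - 1) ^ t * q ^ (n - 2 - t)) := by
    rw [hB, Finset.card_biUnion]
    · have hone : ∀ c : Fin q, (Fintype.piFinset (s c)).card = (q - 1) ^ t * q ^ (n - 2 - t) := by
        intro c
        rw [Fintype.card_piFinset]
        have hsplit : (Finset.univ : Finset V) = ({u, w} ∪ T) ∪ (Finset.univ \ ({u, w} ∪ T)) := by
          rw [Finset.union_sdiff_of_subset (Finset.subset_univ _)]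
        rw [hsplit, Finset.prod_union (Finset.disjoint_sdiff),
          Finset.prod_union (by simp [Finset.disjoint_insert_left, huT, hwT])]
        have h1 : ∏ x ∈ ({u, w} : Finset V), (s c x).card = 1 := by
          rw [Finset.prod_insert (by simpa using huw), Finset.prod_singleton]
          simp [hs]
        have h2 : ∏ x ∈ T, (s c x).card = (q - 1) ^ t := by
          rw [Finset.prod_congr rfl (fun x hx => ?_), Finset.prod_const, ht]
          have hxu : x ≠ u := fun h => huT (h ▸ hx)
          have hxw : x ≠ w := fun h => hwT (h ▸ hx)
          simp [hs, hxu, hxw, hx, Finset.card_compl]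
        have h3 : ∏ x ∈ Finset.univ \ ({u, w} ∪ T), (s c x).card = q ^ (n - 2 - t) := by
          rw [Finset.prod_congr rfl (fun x hx => ?_), Finset.prod_const]
          · congr 1
            rw [Finset.card_sdiff_of_subset (Finset.subset_univ _), Finset.card_union_of_disjoint
              (by simp [Finset.disjoint_insert_left, huT, hwT]),
              Finset.card_insert_of_notMem (by simpa using huw), Finset.card_singleton]
            simp [hn]
            omega
          · simp only [Finset.mem_sdiff, Finset.mem_union, Finset.mem_insert,
              Finset.mem_singleton, not_or] at hx
            simp [hs, hx.2.1.1, hx.2.1.2, hx.2.2]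
        rw [h1, h2, h3, one_mul]
      simp [hone, Finset.sum_const, Finset.card_univ, mul_comm]
    · intro c _ c' _ hcc'
      refine Finset.disjoint_left.2 fun f hf hf' => hcc' ?_
      rw [← hmemu c f hf, ← hmemu c' f hf']
  have hBsub : (↑B : Set (V → Fin q)) ⊆
      {f : V → Fin q | f u = f w ∧
          (∀ x ∈ G.neighborFinset u, f x ≠ f u) ∧
          (∀ x ∈ G.neighborFinset w, f x ≠ f w) ∧
          (∀ x ∈ G.neighborFinset v, x ≠ u → x ≠ w → f x ≠ f u)} := by
    intro f hf
    simp only [hB, Finset.coe_biUnion, Set.mem_iUnion, Finset.mem_coe,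
      Finset.mem_univ, Set.iUnion_true] at hf
    obtain ⟨c, hc⟩ := hf
    have hfu : f u = c := hmemu c f hc
    have hfw : f w = c := by
      have := Fintype.mem_piFinset.1 hc w
      simpa [hs] using this
    have hTc : ∀ x ∈ T, f x ≠ c := by
      intro x hx
      have hxu : x ≠ u := fun h => huT (h ▸ hx)
      have hxw : x ≠ w := fun h => hwT (h ▸ hx)
      have := Fintype.mem_piFinset.1 hc x
      simpa [hs, hxu, hxw, hx] using this
    have hmemT : ∀ x, x ≠ u → x ≠ w →
        (x ∈ G.neighborFinset u ∨ x ∈ G.neighborFinset w ∨ x ∈ G.neighborFinset v) → x ∈ T := by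
      intro x hxu hxw hx
      rw [hT]
      refine Finset.mem_sdiff.2 ⟨?_, by simp [hxu, hxw]⟩
      rcases hx with h|h|h
      · exact Finset.mem_union_left _ (Finset.mem_union_left _ h)
      · exact Finset.mem_union_left _ (Finset.mem_union_right _ h)
      · exact Finset.mem_union_right _ h
    refine ⟨hfu.trans hfw.symm, ?_, ?_, ?_⟩
    · intro x hx
      have hax : G.Adj u x := by simpa using hx
      have hxu : x ≠ u := by rintro rfl; exact G.irrefl hax
      have hxw : x ≠ w := by rintro rfl; exact hnadj hax
      rw [hfu]; exact hTc x (hmemT x hxu hxw (Or.inl hx))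
    · intro x hx
      have hax : G.Adj w x := by simpa using hx
      have hxw : x ≠ w := by rintro rfl; exact G.irrefl hax
      have hxu : x ≠ u := by rintro rfl; exact hnadj hax.symm
      rw [hfw]; exact hTc x (hmemT x hxu hxw (Or.inr (Or.inl hx)))
    · intro x hx hxu hxw
      rw [hfu]; exact hTc x (hmemT x hxu hxw (Or.inr (Or.inr hx)))
  -- monotonicity
  have hmono := MeasureTheory.measure_mono (μ := (PMF.uniformOfFintype (V → Fin q)).toOuterMeasure) hBsub
  refine le_trans ?_ hmono
  rw [PMF.toOuterMeasure_apply_finset]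
  have hcardfun : Fintype.card (V → Fin q) = q ^ n := by
    simp [hn]
  have hsum : ∑ f ∈ B, PMF.uniformOfFintype (V → Fin q) f
      = (B.card : ENNReal) * ((q : ENNReal) ^ n)⁻¹ := by
    simp [PMF.uniformOfFintype_apply, hcardfun, Finset.sum_const, nsmul_eq_mul]
  rw [hsum, hBcard]
  -- now a numeric inequality in ENNReal
  have hqR : (0 : ℝ) < q := by exact_mod_cast Nat.pos_of_ne_zero (NeZero.ne q)
  have hrhs : ENNReal.ofReal (((q * ((q - 1) ^ t * q ^ (n - 2 - t)) : ℕ) : ℝ) / (q : ℝ) ^ n)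
      = ((q * ((q - 1) ^ t * q ^ (n - 2 - t)) : ℕ) : ENNReal) * ((q : ENNReal) ^ n)⁻¹ := by
    rw [ENNReal.ofReal_div_of_pos (by positivity), ENNReal.ofReal_natCast,
      ENNReal.ofReal_pow hqR.le, ENNReal.ofReal_natCast, div_eq_mul_inv]
  rw [← hrhs]
  apply ENNReal.ofReal_le_ofReal
  have hq0 : (q : ℝ) ≠ 0 := ne_of_gt hqR
  have hcast : ((q - 1 : ℕ) : ℝ) = (q : ℝ) - 1 := by
    rw [Nat.cast_sub hq1, Nat.cast_one]
  have hval : ((q * ((q - 1) ^ t * q ^ (n - 2 - t)) : ℕ) : ℝ) / (q : ℝ) ^ n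
      = (1 / q) * (((q : ℝ) - 1) / q) ^ t := by
    rw [Nat.cast_mul, Nat.cast_mul, Nat.cast_pow, Nat.cast_pow, hcast]
    have hpow : (q:ℝ) ^ n = (q:ℝ) ^ 1 * (q:ℝ) ^ t * (q:ℝ) ^ (n - 2 - t) * (q:ℝ) ^ 1 := by
      rw [← pow_add, ← pow_add, ← pow_add]
      congr 1
      omega
    rw [hpow, pow_one, div_pow]
    field_simp
  rw [hval]
  have hq1R : (1 : ℝ) ≤ q := by exact_mod_cast hq1
  have hbase0 : (0:ℝ) ≤ ((q:ℝ) - 1) / q := div_nonneg (by linarith) hqR.le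
  have hbase1 : ((q:ℝ) - 1) / q ≤ 1 := by rw [div_le_one hqR]; linarith
  exact mul_le_mul_of_nonneg_left (pow_le_pow_of_le_one hbase0 hbase1 htΔ) (by positivity)
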